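/- Let n ≥ 2. For every ψ ∈ 𝒮(ℝ) with ψ ≠ 0 there exists η ∈ 𝒮₀(ℝ) such that the constant K_{ψ,η} = (2π)^{n-1} ∫_{-∞}^{∞} conj(ψ̂(ω)) η̂(ω) |ω|^{-n} dω is finite and non-zero, i.e., the integral converges absolutely and K_{ψ,η} ≠ 0. -/

import Mathlib

/- Formalization of results from:
   "The ridgelet transform and quasiasymptotic behavior of distributions"
   by Kostadinova, Pilipović, Saneva, Vindas. -/

open MeasureTheory Filter Topology Asymptotics
open scoped RealInnerProductSpace

noncomputable section

/-- Euclidean space ℝⁿ. -/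
abbrev En (n : ℕ) : Type := EuclideanSpace ℝ (Fin n)

/-- The unit sphere 𝕊^{n-1} ⊆ ℝⁿ. -/
abbrev Sph (n : ℕ) := Metric.sphere (0 : En n) 1

/-- The surface measure on the unit sphere 𝕊^{n-1}. -/
def sphereMeasure (n : ℕ) : Measure (Sph n) := (volume : Measure (En n)).toSphere

/-- The Lizorkin space `𝒮₀(ℝ)` of Schwartz functions on ℝ with all vanishing moments. -/
def LizorkinSubmodule1 : Submodule ℂ (SchwartzMap ℝ ℂ) where
  carrier := {φ | ∀ m : ℕ,
      Integrable (fun x : ℝ => (x ^ m : ℝ) • φ x) ∧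
      ∫ x : ℝ, (x ^ m : ℝ) • φ x = 0}
  add_mem' := by
    intro f g hf hg m
    obtain ⟨hfi, hfv⟩ := hf m
    obtain ⟨hgi, hgv⟩ := hg m
    constructor
    · exact (hfi.add hgi).congr (Eventually.of_forall fun x => by simp [smul_add])
    · have : (fun x : ℝ => (x ^ m : ℝ) • (f + g) x)
          = fun x : ℝ => (x ^ m : ℝ) • f x + (x ^ m : ℝ) • g x := by
        funext x; simp [smul_add]
      rw [this, integral_add hfi hgi, hfv, hgv, add_zero]
  zero_mem' := by
    intro m
    constructor
    · simp
    · simp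
  smul_mem' := by
    intro c f hf m
    obtain ⟨hfi, hfv⟩ := hf m
    have hfun : (fun x : ℝ => (x ^ m : ℝ) • (c • f) x)
        = c • fun x : ℝ => (x ^ m : ℝ) • f x := by
      funext x
      simp only [SchwartzMap.smul_apply, Pi.smul_apply, smul_eq_mul, Complex.real_smul]
      ring
    constructor
    · rw [hfun]; exact hfi.smul c
    · rw [hfun]
      show (∫ x : ℝ, c • ((x ^ m : ℝ) • f x)) = 0
      rw [integral_smul, hfv, smul_zero]

/-- Lizorkin test functions on ℝ. -/
abbrev Lizorkin1 := ↥LizorkinSubmodule1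

/-- The Fourier transform `ĝ(ω) = ∫ g(t) e^{-iωt} dt` (classical convention). -/
def classicalFT (g : ℝ → ℂ) (ω : ℝ) : ℂ :=
  ∫ t : ℝ, Complex.exp (-(Complex.I * (ω : ℂ) * (t : ℂ))) * g t


/-- The classical Fourier transform equals Mathlib's Fourier integral at `ω / (2π)`. -/
lemma classicalFT_eq_fourierIntegral (g : ℝ → ℂ) (ω : ℝ) :
    classicalFT g ω = FourierTransform.fourier g (ω / (2 * Real.pi)) := by
  rw [Real.fourier_real_eq_integral_exp_smul]
  unfold classicalFT
  congr 1
  ext t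
  rw [smul_eq_mul]
  congr 2
  have : (-2 * Real.pi * t * (ω / (2 * Real.pi)) : ℝ) = -(t * ω) := by
    have hπ : (Real.pi : ℝ) ≠ 0 := Real.pi_ne_zero
    field_simp
  rw [this]
  push_cast
  ring

/-- A smooth compactly supported function has temperate growth. -/
lemma hasTemperateGrowth_of_compactSupport {f : ℝ → ℝ} (hf : ContDiff ℝ ((⊤ : ℕ∞) : ℕ∞) f)
    (hsupp : HasCompactSupport f) : Function.HasTemperateGrowth f := by
  refine ⟨hf, fun n => ?_⟩
  obtain ⟨C, hC⟩ := (hsupp.iteratedFDeriv n).exists_bound_of_continuous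
    (hf.continuous_iteratedFDeriv (by exact_mod_cast le_top))
  exact ⟨0, C, fun x => by simpa using hC x⟩

/-- The Fourier integral at `0` is the integral of the function. -/
lemma fourierIntegral_at_zero (f : ℝ → ℂ) : FourierTransform.fourier f 0 = ∫ x, f x := by
  rw [Real.fourier_real_eq]
  simp

lemma iteratedDeriv_zero_fun' (m : ℕ) :
    iteratedDeriv m (fun _ : ℝ => (0 : ℂ)) = fun _ => 0 := by
  induction m with
  | zero => simp [iteratedDeriv_zero]
  | succ k ih => rw [iteratedDeriv_succ, ih]; funext x; simp

/-- **after Definition 2.1.**  Let n ≥ 2.  Every nonzero `ψ ∈ 𝒮(ℝ)` admits a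
reconstruction neuronal activation function `η ∈ 𝒮₀(ℝ)`: the constant
`K_{ψ,η} = (2π)^{n-1} ∫ conj(ψ̂(ω)) η̂(ω) |ω|^{-n} dω` is finite (the integral converges
absolutely) and non-zero. -/
theorem exists_reconstruction_neuronal_activation_function
    (n : ℕ) (hn : 2 ≤ n)
    (ψ : SchwartzMap ℝ ℂ) (hψ : ψ ≠ 0) :
    ∃ η : SchwartzMap ℝ ℂ, η ∈ LizorkinSubmodule1 ∧
      Integrable (fun ω : ℝ => (starRingEnd ℂ) (classicalFT (fun t => ψ t) ω)
        * classicalFT (fun t => η t) ω * (((|ω| ^ n : ℝ) : ℂ))⁻¹) ∧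
      ((2 * Real.pi) ^ (n - 1) : ℝ) •
        (∫ ω : ℝ, (starRingEnd ℂ) (classicalFT (fun t => ψ t) ω)
          * classicalFT (fun t => η t) ω * (((|ω| ^ n : ℝ) : ℂ))⁻¹) ≠ 0 := by
  classical
  set Ψ : SchwartzMap ℝ ℂ := SchwartzMap.fourierTransformCLE ℂ (SchwartzMap ℝ ℂ) ψ with hΨdef
  have hΨne : Ψ ≠ 0 := by
    intro h
    exact hψ ((SchwartzMap.fourierTransformCLE ℂ (SchwartzMap ℝ ℂ)).map_eq_zero_iff.mp h)
  -- find a nonzero frequency where Ψ does not vanish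
  obtain ⟨ξ₀, hξ₀ne, hΨξ₀⟩ : ∃ ξ₀ : ℝ, ξ₀ ≠ 0 ∧ Ψ ξ₀ ≠ 0 := by
    by_contra hcon
    push_neg at hcon
    apply hΨne
    have heq : (⇑Ψ : ℝ → ℂ) = fun _ => 0 := by
      apply Continuous.ext_on (dense_compl_singleton (0 : ℝ)) Ψ.continuous continuous_const
      intro x hx
      exact hcon x hx
    ext x
    exact congrFun heq x
  set r : ℝ := |ξ₀| with hrdef
  have hrpos : 0 < r := abs_pos.mpr hξ₀ne
  -- a bump function around ξ₀ supported away from 0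
  let b : ContDiffBump ξ₀ := ⟨r / 4, r / 2, by positivity, by linarith⟩
  have hb_zero : ∀ ξ : ℝ, |ξ| < r / 2 → b ξ = 0 := by
    intro ξ hξ
    apply b.zero_of_le_dist
    have : dist ξ ξ₀ ≥ |ξ₀| - |ξ| := by
      rw [Real.dist_eq]
      have := abs_sub_abs_le_abs_sub ξ₀ ξ
      rw [abs_sub_comm] at this
      linarith
    simp only [hrdef] at *
    have hb : b.rOut = |ξ₀| / 2 := rfl; linarith
  have hb_temp : Function.HasTemperateGrowth (⇑b) :=
    hasTemperateGrowth_of_compactSupport (f := ⇑b) b.contDiff b.hasCompactSupport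
  -- g = b • Ψ as a Schwartz function
  let L : ℂ →L[ℝ] ℝ →L[ℝ] ℂ := (ContinuousLinearMap.lsmul ℝ ℝ : ℝ →L[ℝ] ℂ →L[ℝ] ℂ).flip
  let g : SchwartzMap ℝ ℂ := SchwartzMap.bilinLeftCLM L hb_temp Ψ
  have hg_apply : ∀ ξ : ℝ, g ξ = (b ξ : ℂ) * Ψ ξ := by
    intro ξ
    show L (Ψ ξ) (b ξ) = _
    simp [L, Complex.real_smul]
  have hg_zero : ∀ ξ : ℝ, |ξ| < r / 2 → g ξ = 0 := by
    intro ξ hξ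
    rw [hg_apply, hb_zero ξ hξ]
    simp
  -- η is the inverse Fourier transform of g
  set η : SchwartzMap ℝ ℂ := (SchwartzMap.fourierTransformCLE ℂ (SchwartzMap ℝ ℂ)).symm g with hηdef
  have hFη : FourierTransform.fourier (⇑η) = ⇑g := by
    have h1 : SchwartzMap.fourierTransformCLE ℂ (SchwartzMap ℝ ℂ) η = g :=
      (SchwartzMap.fourierTransformCLE ℂ (SchwartzMap ℝ ℂ)).apply_symm_apply g
    calc FourierTransform.fourier (⇑η) = ⇑(SchwartzMap.fourierTransformCLE ℂ (SchwartzMap ℝ ℂ) η) :=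
          rfl
      _ = ⇑g := by rw [h1]
  have h2π : (0 : ℝ) < 2 * Real.pi := by positivity
  -- integrability of moments
  have hint : ∀ m : ℕ, Integrable (fun x : ℝ => (x ^ m : ℝ) • η x) := by
    intro m
    refine (η.integrable_pow_mul volume m).mono' ?_ ?_
    · exact ((continuous_pow m).smul η.continuous).aestronglyMeasurable
    · filter_upwards with x
      rw [norm_smul]
      simp [abs_pow]
  -- η is in the Lizorkin space
  have hmem : η ∈ LizorkinSubmodule1 := by
    intro m
    refine ⟨hint m, ?_⟩
    have hd := Real.iteratedDeriv_fourier (f := ⇑η) (N := (⊤ : ℕ∞)) (n := m)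
      (fun k _ => hint k) le_top
    have hzero : iteratedDeriv m (FourierTransform.fourier (⇑η)) 0 = 0 := by
      rw [hFη]
      have hev : (⇑g : ℝ → ℂ) =ᶠ[nhds (0 : ℝ)] (fun _ => 0) := by
        filter_upwards [Metric.ball_mem_nhds (0 : ℝ) (show (0:ℝ) < r / 2 by positivity)] with ξ hξ
        exact hg_zero ξ (by simpa [Real.dist_eq] using hξ)
      rw [hev.iteratedDeriv_eq m, iteratedDeriv_zero_fun' m]
    rw [hd] at hzero
    rw [fourierIntegral_at_zero] at hzero
    have hrw : (fun x : ℝ => ((-2 : ℂ) * Real.pi * Complex.I * x) ^ m • η x)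
        = fun x : ℝ => ((-2 : ℂ) * Real.pi * Complex.I) ^ m • ((x ^ m : ℝ) • η x) := by
      funext x
      simp only [smul_eq_mul, Complex.real_smul, mul_pow]
      push_cast
      ring
    rw [hrw, integral_smul] at hzero
    rcases smul_eq_zero.mp hzero with h | h
    · exfalso
      apply pow_ne_zero m _ h
      simp [Complex.ext_iff, Real.pi_ne_zero]
    · exact h
  refine ⟨η, hmem, ?_⟩
  -- the explicit form of the integrand
  have hψFT : ∀ ω : ℝ, classicalFT (fun t => ψ t) ω = Ψ (ω / (2 * Real.pi)) := by
    intro ω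
    rw [show (fun t => ψ t) = ⇑ψ from rfl, classicalFT_eq_fourierIntegral]
    rfl
  have hηFT : ∀ ω : ℝ, classicalFT (fun t => η t) ω
      = (b (ω / (2 * Real.pi)) : ℂ) * Ψ (ω / (2 * Real.pi)) := by
    intro ω
    rw [show (fun t => η t) = ⇑η from rfl, classicalFT_eq_fourierIntegral, hFη, hg_apply]
  set h : ℝ → ℝ := fun ω =>
    b (ω / (2 * Real.pi)) * ‖Ψ (ω / (2 * Real.pi))‖ ^ 2 * ((|ω| ^ n : ℝ))⁻¹ with hhdef
  have hFeq : (fun ω : ℝ => (starRingEnd ℂ) (classicalFT (fun t => ψ t) ω)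
        * classicalFT (fun t => η t) ω * (((|ω| ^ n : ℝ) : ℂ))⁻¹)
      = fun ω : ℝ => ((h ω : ℝ) : ℂ) := by
    funext ω
    rw [hψFT, hηFT]
    simp only [hhdef]
    push_cast
    rw [show ((‖Ψ (ω / (2 * Real.pi))‖ : ℂ) ^ 2)
        = (starRingEnd ℂ) (Ψ (ω / (2 * Real.pi))) * Ψ (ω / (2 * Real.pi)) from
      (RCLike.conj_mul _).symm]
    ring
  -- h vanishes for small ω
  have hh_zero : ∀ ω : ℝ, |ω| < 2 * Real.pi * (r / 2) → h ω = 0 := by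
    intro ω hω
    have : |ω / (2 * Real.pi)| < r / 2 := by
      rw [abs_div, abs_of_pos h2π, div_lt_iff₀ h2π]
      calc |ω| < 2 * Real.pi * (r / 2) := hω
        _ = r / 2 * (2 * Real.pi) := by ring
    simp only [hhdef, hb_zero _ this, zero_mul]
  -- continuity of h
  have hcont : Continuous h := by
    rw [continuous_iff_continuousAt]
    intro ω
    rcases eq_or_ne ω 0 with rfl | hω
    · have hev : h =ᶠ[nhds (0 : ℝ)] fun _ => 0 := by
        filter_upwards [Metric.ball_mem_nhds (0 : ℝ)
          (show (0:ℝ) < 2 * Real.pi * (r / 2) by positivity)] with ξ hξ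
        exact hh_zero ξ (by simpa [Real.dist_eq] using hξ)
      exact (continuousAt_const.congr hev.symm)
    · refine ContinuousAt.mul (ContinuousAt.mul ?_ ?_) ?_
      · exact (b.continuous.comp (continuous_id.div_const _)).continuousAt
      · exact (((Ψ.continuous.comp (continuous_id.div_const _)).norm).pow 2).continuousAt
      · exact ContinuousAt.inv₀ ((continuous_abs.pow n).continuousAt)
          (pow_ne_zero n (abs_ne_zero.mpr hω))
  -- compact support of h
  have hsupp : HasCompactSupport h := by
    apply HasCompactSupport.intro (isCompact_closedBall (0 : ℝ) (2 * Real.pi * (2 * r)))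
    intro ξ hξ
    simp only [Metric.mem_closedBall, Real.dist_eq, sub_zero, not_le] at hξ
    simp only [hhdef]
    rw [b.zero_of_le_dist, zero_mul, zero_mul]
    have h1 : 2 * r < |ξ / (2 * Real.pi)| := by
      rw [abs_div, abs_of_pos h2π, lt_div_iff₀ h2π]
      calc 2 * r * (2 * Real.pi) = 2 * Real.pi * (2 * r) := by ring
        _ < |ξ| := hξ
    have h2 : dist (ξ / (2 * Real.pi)) ξ₀ ≥ |ξ / (2 * Real.pi)| - |ξ₀| := by
      rw [Real.dist_eq]
      have := abs_sub_abs_le_abs_sub (ξ / (2 * Real.pi)) ξ₀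
      linarith
    show r / 2 ≤ _
    simp only [hrdef] at *
    linarith
  have hInth : Integrable h := hcont.integrable_of_hasCompactSupport hsupp
  have hnonneg : ∀ ω : ℝ, 0 ≤ h ω := by
    intro ω
    exact mul_nonneg (mul_nonneg b.nonneg (sq_nonneg _))
      (inv_nonneg.mpr (pow_nonneg (abs_nonneg _) n))
  have hpos : 0 < ∫ ω : ℝ, h ω := by
    rw [integral_pos_iff_support_of_nonneg hnonneg hInth]
    have hopen : IsOpen {ω : ℝ | 0 < h ω} := isOpen_lt continuous_const hcont
    have hmemset : (2 * Real.pi * ξ₀) ∈ {ω : ℝ | 0 < h ω} := by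
      simp only [Set.mem_setOf_eq, hhdef]
      have h1 : (2 * Real.pi * ξ₀) / (2 * Real.pi) = ξ₀ := by
        field_simp
      rw [h1, b.one_of_mem_closedBall (Metric.mem_closedBall_self (le_of_lt b.rIn_pos))]
      have hn1 : (0 : ℝ) < ‖Ψ ξ₀‖ ^ 2 := pow_pos (norm_pos_iff.mpr hΨξ₀) 2
      have hn2 : (0 : ℝ) < (|2 * Real.pi * ξ₀| ^ n)⁻¹ := by
        apply inv_pos.mpr
        apply pow_pos
        rw [abs_pos]
        exact mul_ne_zero (by positivity) hξ₀ne
      calc (0:ℝ) < 1 * (‖Ψ ξ₀‖ ^ 2) * (|2 * Real.pi * ξ₀| ^ n)⁻¹ := by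
            rw [one_mul]; exact mul_pos hn1 hn2
        _ = _ := by ring
    calc (0 : ENNReal) < volume {ω : ℝ | 0 < h ω} := hopen.measure_pos volume ⟨_, hmemset⟩
      _ ≤ volume (Function.support h) := measure_mono (fun x hx => ne_of_gt hx)
  constructor
  · rw [hFeq]
    exact hInth.ofReal
  · rw [hFeq]
    have hio : (∫ ω : ℝ, ((h ω : ℝ) : ℂ)) = ((∫ ω : ℝ, h ω : ℝ) : ℂ) := integral_ofReal
    rw [hio]
    apply smul_ne_zero
    · exact pow_ne_zero _ (by positivity)
    · exact Complex.ofReal_ne_zero.mpr (ne_of_gt hpos)
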